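/- Let m,n,x,y be positive integers, not both m=n=1, with gcd(x,y)=gcd(m,y)=gcd(n,x)=1. Then τ_{xm,yn} = τ_{m,n}. -/

import Mathlib

/-- A line on the discrete torus `ZMod m × ZMod n`: the image of an integer line
`{A + k•(u,v) : k ∈ ℤ}` with `gcd(u,v) = 1`. -/
def torusLine (m n : ℕ) (L : Set (ZMod m × ZMod n)) : Prop :=
  ∃ (A : ZMod m × ZMod n) (u v : ℤ), Int.gcd u v = 1 ∧
    L = {P | ∃ k : ℤ, P = (A.1 + ((k * u : ℤ) : ZMod m), A.2 + ((k * v : ℤ) : ZMod n))}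

/-- Three points of the torus are collinear if some line contains all three. -/
def torusCollinear (m n : ℕ) (P Q R : ZMod m × ZMod n) : Prop :=
  ∃ L, torusLine m n L ∧ P ∈ L ∧ Q ∈ L ∧ R ∈ L

/-- No three (distinct) points of `S` lie on a common line. -/
def noThreeInLine (m n : ℕ) (S : Set (ZMod m × ZMod n)) : Prop :=
  ∀ P ∈ S, ∀ Q ∈ S, ∀ R ∈ S, P ≠ Q → P ≠ R → Q ≠ R → ¬ torusCollinear m n P Q R

/-- `tau m n`: maximal number of points on the torus with no three collinear. -/
noncomputable def tau (m n : ℕ) : ℕ :=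
  sSup {k | ∃ S : Finset (ZMod m × ZMod n), noThreeInLine m n ↑S ∧ S.card = k}

lemma exists_dir (a b : ℤ) : ∃ U V d : ℤ, Int.gcd U V = 1 ∧ d * U = a ∧ d * V = b := by
  by_cases h : a = 0 ∧ b = 0
  · exact ⟨1, 0, 0, by simp, by simp [h.1], by simp [h.2]⟩
  · have hg : Int.gcd a b ≠ 0 := by
      intro h0
      exact h ⟨(Int.gcd_eq_zero_iff.mp h0).1, (Int.gcd_eq_zero_iff.mp h0).2⟩
    refine ⟨a / Int.gcd a b, b / Int.gcd a b, Int.gcd a b, ?_, ?_, ?_⟩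
    · exact Int.gcd_div_gcd_div_gcd (Nat.pos_of_ne_zero hg)
    · rw [Int.mul_ediv_cancel' (Int.gcd_dvd_left _ _)]
    · rw [Int.mul_ediv_cancel' (Int.gcd_dvd_right _ _)]

lemma exists_int_lift {M : ℕ} [NeZero M] (z : ZMod M) : ∃ c : ℤ, (c : ZMod M) = z :=
  ⟨z.val, by simp⟩

lemma exists_solution {a c : ℤ} (N : ℕ) (h : (Int.gcd a N : ℤ) ∣ c) :
    ∃ z : ℤ, a * z ≡ c [ZMOD (N:ℤ)] := by
  obtain ⟨c', hc'⟩ := h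
  refine ⟨Int.gcdA a N * c', Int.ModEq.symm (Int.modEq_iff_dvd.mpr ⟨-(Int.gcdB a N * c'), ?_⟩)⟩
  have hb := Int.gcd_eq_gcd_ab a N
  rw [hc', hb]; ring

lemma dvd_of_dvd_prime_mul {p m d : ℕ} (hp : p.Prime) (hm : m ≠ 0)
    (hd : d ∣ p * m) (h : ¬ p ^ (m.factorization p + 1) ∣ d) : d ∣ m := by
  have hd0 : d ≠ 0 := by rintro rfl; exact h (dvd_zero _)
  have he : d.factorization p ≤ m.factorization p := by
    by_contra hlt
    push_neg at hlt
    exact h ((pow_dvd_pow p hlt).trans (Nat.ordProj_dvd d p))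
  have h1 : p ^ (d.factorization p) ∣ m :=
    (Nat.Prime.pow_dvd_iff_le_factorization hp hm).mpr he
  have h2 : Nat.Coprime p (d / p ^ (d.factorization p)) := Nat.coprime_ordCompl hp hd0
  have h3 : (d / p ^ (d.factorization p)) ∣ m := by
    have h5 : (d / p ^ d.factorization p) ∣ p * m := (Nat.ordCompl_dvd d p).trans hd
    exact Nat.Coprime.dvd_of_dvd_mul_left h2.symm h5
  have h4 := Nat.Coprime.mul_dvd_of_dvd_of_dvd (Nat.Coprime.pow_left _ h2) h1 h3
  calc d = p ^ d.factorization p * (d / p ^ d.factorization p) :=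
        (Nat.ordProj_mul_ordCompl_eq_self d p).symm
    _ ∣ m := h4

lemma two_point_line (M N : ℕ) [NeZero M] [NeZero N] (P Q : ZMod M × ZMod N) :
    ∃ L, torusLine M N L ∧ P ∈ L ∧ Q ∈ L := by
  obtain ⟨a, ha⟩ := exists_int_lift (Q.1 - P.1)
  obtain ⟨b, hb⟩ := exists_int_lift (Q.2 - P.2)
  obtain ⟨U, V, d, hUV, hU, hV⟩ := exists_dir a b
  refine ⟨_, ⟨P, U, V, hUV, rfl⟩, ⟨0, by simp⟩, ⟨d, ?_⟩⟩
  have h1 : ((d * U : ℤ) : ZMod M) = Q.1 - P.1 := by rw [hU, ha]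
  have h2 : ((d * V : ℤ) : ZMod N) = Q.2 - P.2 := by rw [hV, hb]
  rw [h1, h2]
  ext <;> simp

lemma gen_exists_aux (p m n : ℕ) (hp : p.Prime) (hm : m ≠ 0) (hn : n ≠ 0) (hpn : ¬ p ∣ n)
    (u v lam : ℤ) (ha0 : ¬ ((p:ℤ)) ^ (m.factorization p + 1) ∣ (u + lam * m)) :
    ∃ a b s t : ℤ, s * a ≡ u [ZMOD ((p*m : ℕ) : ℤ)] ∧ s * b ≡ v [ZMOD (n : ℤ)] ∧
      t * a ≡ (m:ℤ) [ZMOD ((p*m : ℕ) : ℤ)] ∧ t * b ≡ 0 [ZMOD (n : ℤ)] := by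
  set a : ℤ := u + lam * m with ha
  set g : ℕ := Int.gcd v n with hgdef
  have hgv : (g:ℤ) ∣ v := Int.gcd_dvd_left _ _
  have hgn : g ∣ n := Int.ofNat_dvd.mp (by exact_mod_cast (Int.gcd_dvd_right _ _ : (g:ℤ) ∣ (n:ℤ)))
  set n₁ : ℕ := n / g with hn₁
  have hn₁n : n₁ ∣ n := Nat.div_dvd_of_dvd hgn
  have hnn₁v : (n:ℤ) ∣ (n₁:ℤ) * v := by
    obtain ⟨v', hv'⟩ := hgv
    refine ⟨v', ?_⟩
    rw [hv']
    have : (n₁ : ℤ) * (g : ℤ) = (n : ℤ) := by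
      rw [← Nat.cast_mul, Nat.div_mul_cancel hgn]
    rw [← mul_assoc, this]
  have hpn₁ : ¬ p ∣ n₁ := fun hd => hpn (hd.trans hn₁n)
  -- the gcd divides m
  set G : ℕ := Int.gcd ((n₁:ℤ) * a) ((p*m : ℕ) : ℤ) with hGdef
  have hGpm : G ∣ p * m := Int.ofNat_dvd.mp (by exact_mod_cast (Int.gcd_dvd_right _ _ : (G:ℤ) ∣ ((p*m:ℕ):ℤ)))
  have hGnot : ¬ p ^ (m.factorization p + 1) ∣ G := by
    intro hdvd
    apply ha0
    have h1 : ((p:ℤ)) ^ (m.factorization p + 1) ∣ (n₁:ℤ) * a := by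
      calc ((p:ℤ)) ^ (m.factorization p + 1) = ((p ^ (m.factorization p + 1) : ℕ) : ℤ) := by push_cast; ring
      _ ∣ (G : ℤ) := Int.ofNat_dvd.mpr hdvd
      _ ∣ (n₁:ℤ) * a := Int.gcd_dvd_left _ _
    have hcop : IsCoprime ((p:ℤ) ^ (m.factorization p + 1)) (n₁:ℤ) := by
      apply IsCoprime.pow_left
      rw [Int.isCoprime_iff_gcd_eq_one, Int.gcd_natCast_natCast]
      exact (Nat.Prime.coprime_iff_not_dvd hp).mpr hpn₁
    exact hcop.dvd_of_dvd_mul_left h1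
  have hGm : G ∣ m := dvd_of_dvd_prime_mul hp hm hGpm hGnot
  obtain ⟨t'', ht''⟩ := exists_solution (p*m) (a := (n₁:ℤ) * a) (c := (m:ℤ))
    (Int.ofNat_dvd.mpr hGm)
  refine ⟨a, v, 1 - lam * ((n₁:ℤ) * t''), (n₁:ℤ) * t'', ?_, ?_, ?_, ?_⟩
  · calc (1 - lam * ((n₁:ℤ) * t'')) * a = a - lam * (((n₁:ℤ) * a) * t'') := by ring
      _ ≡ a - lam * (m:ℤ) [ZMOD ((p*m:ℕ):ℤ)] :=
        Int.ModEq.sub (Int.ModEq.refl a) (Int.ModEq.mul_left lam ht'')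
      _ = u := by rw [ha]; ring
  · have htb : ((n₁:ℤ) * t'') * v ≡ 0 [ZMOD (n:ℤ)] := by
      rw [Int.modEq_zero_iff_dvd]
      have heq : ((n₁:ℤ) * t'') * v = ((n₁:ℤ) * v) * t'' := by ring
      rw [heq]
      exact Dvd.dvd.mul_right hnn₁v t''
    calc (1 - lam * ((n₁:ℤ) * t'')) * v = v - lam * (((n₁:ℤ) * t'') * v) := by ring
      _ ≡ v - lam * 0 [ZMOD (n:ℤ)] :=
        Int.ModEq.sub (Int.ModEq.refl v) (Int.ModEq.mul_left lam htb)
      _ = v := by ring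
  · calc ((n₁:ℤ) * t'') * a = ((n₁:ℤ) * a) * t'' := by ring
      _ ≡ (m:ℤ) [ZMOD ((p*m:ℕ):ℤ)] := ht''
  · rw [Int.modEq_zero_iff_dvd]
    have : ((n₁:ℤ) * t'') * v = ((n₁:ℤ) * v) * t'' := by ring
    rw [this]
    exact Dvd.dvd.mul_right hnn₁v t''


lemma gen_exists (p m n : ℕ) (hp : p.Prime) (hm : m ≠ 0) (hn : n ≠ 0) (hpn : ¬ p ∣ n)
    (u v : ℤ) :
    ∃ a b s t : ℤ, s * a ≡ u [ZMOD ((p*m : ℕ) : ℤ)] ∧ s * b ≡ v [ZMOD (n : ℤ)] ∧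
      t * a ≡ (m:ℤ) [ZMOD ((p*m : ℕ) : ℤ)] ∧ t * b ≡ 0 [ZMOD (n : ℤ)] := by
  by_cases hu : ((p:ℤ)) ^ (m.factorization p + 1) ∣ u
  · apply gen_exists_aux p m n hp hm hn hpn u v 1
    intro hd
    have hdm : ((p:ℤ)) ^ (m.factorization p + 1) ∣ (m:ℤ) := by
      have he : (u + 1 * (m:ℤ)) - u = (m:ℤ) := by ring
      exact he ▸ dvd_sub hd hu
    have hnat : p ^ (m.factorization p + 1) ∣ m :=
      Int.ofNat_dvd.mp (by push_cast; exact hdm)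
    have := (Nat.Prime.pow_dvd_iff_le_factorization hp hm).mp hnat
    omega
  · apply gen_exists_aux p m n hp hm hn hpn u v 0
    simpa using hu

section
variable (p m n : ℕ)

def tf : ZMod (p*m) × ZMod n → ZMod m × ZMod n :=
  fun P => (ZMod.castHom (dvd_mul_left m p) (ZMod m) P.1, P.2)

lemma collinear_lift (hp : p.Prime) (hm : m ≠ 0) (hn : n ≠ 0) (hpn : ¬ p ∣ n)
    (P Q R : ZMod (p*m) × ZMod n)
    (h : torusCollinear m n (tf p m n P) (tf p m n Q) (tf p m n R)) :
    torusCollinear (p*m) n P Q R := by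
  haveI : NeZero m := ⟨hm⟩
  haveI : NeZero n := ⟨hn⟩
  haveI : NeZero (p*m) := ⟨Nat.mul_ne_zero hp.pos.ne' hm⟩
  obtain ⟨L, ⟨A, u, v, huv, rfl⟩, hP, hQ, hR⟩ := h
  obtain ⟨kP, hkP⟩ := hP
  obtain ⟨kQ, hkQ⟩ := hQ
  obtain ⟨kR, hkR⟩ := hR
  obtain ⟨a, b, s, t, hsa, hsb, hta, htb⟩ := gen_exists p m n hp hm hn hpn u v
  obtain ⟨U, V, d, hUV, hU, hV⟩ := exists_dir a b
  have hP1 : ZMod.castHom (dvd_mul_left m p) (ZMod m) P.1 = A.1 + ((kP*u : ℤ) : ZMod m) :=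
    congrArg Prod.fst hkP
  have hP2 : P.2 = A.2 + ((kP*v : ℤ) : ZMod n) := congrArg Prod.snd hkP
  have key : ∀ (X : ZMod (p*m) × ZMod n) (k : ℤ),
      X ∈ {Y : ZMod (p*m) × ZMod n | True} →
      tf p m n X = (A.1 + ((k*u : ℤ) : ZMod m), A.2 + ((k*v : ℤ) : ZMod n)) →
      ∃ K : ℤ, X = (P.1 + ((K*U : ℤ) : ZMod (p*m)), P.2 + ((K*V : ℤ) : ZMod n)) := by
    intro X k _ hX
    have hX1 : ZMod.castHom (dvd_mul_left m p) (ZMod m) X.1 = A.1 + ((k*u : ℤ) : ZMod m) :=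
      congrArg Prod.fst hX
    have hX2 : X.2 = A.2 + ((k*v : ℤ) : ZMod n) := congrArg Prod.snd hX
    obtain ⟨c, hc⟩ := exists_int_lift (X.1 - P.1)
    have hc2 : ((c : ℤ) : ZMod m) = (((k - kP)*u : ℤ) : ZMod m) := by
      have h7 : ZMod.castHom (dvd_mul_left m p) (ZMod m) (X.1 - P.1)
          = ((k*u : ℤ) : ZMod m) - ((kP*u : ℤ) : ZMod m) := by
        rw [map_sub, hX1, hP1]; ring
      rw [← hc, map_intCast] at h7
      rw [h7]; push_cast; ring
    have hmod : c ≡ (k - kP)*u [ZMOD (m:ℤ)] := (ZMod.intCast_eq_intCast_iff _ _ _).mp hc2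
    obtain ⟨a₁, ha₁⟩ := hmod.dvd
    have hcc : c = (k - kP)*u - (m:ℤ)*a₁ := by linarith
    refine ⟨((k - kP)*s - a₁*t)*d, Prod.ext ?_ ?_⟩
    · have h5 : ((((k - kP)*s - a₁*t)*d * U : ℤ) : ZMod (p*m)) = ((c : ℤ) : ZMod (p*m)) := by
        rw [ZMod.intCast_eq_intCast_iff]
        calc ((k - kP)*s - a₁*t)*d*U = (k - kP)*(s*a) - a₁*(t*a) := by rw [← hU]; ring
          _ ≡ (k - kP)*u - a₁*(m:ℤ) [ZMOD ((p*m : ℕ) : ℤ)] :=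
            Int.ModEq.sub (Int.ModEq.mul_left _ hsa) (Int.ModEq.mul_left _ hta)
          _ = c := by rw [hcc]; ring
      rw [h5, hc]
      ring
    · have h6 : ((((k - kP)*s - a₁*t)*d * V : ℤ) : ZMod n) = (((k - kP)*v : ℤ) : ZMod n) := by
        rw [ZMod.intCast_eq_intCast_iff]
        calc ((k - kP)*s - a₁*t)*d*V = (k - kP)*(s*b) - a₁*(t*b) := by rw [← hV]; ring
          _ ≡ (k - kP)*v - a₁*0 [ZMOD (n:ℤ)] :=
            Int.ModEq.sub (Int.ModEq.mul_left _ hsb) (Int.ModEq.mul_left _ htb)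
          _ = (k - kP)*v := by ring
      rw [h6, hX2, hP2]
      push_cast
      ring
  obtain ⟨KQ, hKQ⟩ := key Q kQ trivial hkQ
  obtain ⟨KR, hKR⟩ := key R kR trivial hkR
  exact ⟨_, ⟨P, U, V, hUV, rfl⟩, ⟨0, by simp⟩, ⟨KQ, hKQ⟩, ⟨KR, hKR⟩⟩

lemma collinear_push (P Q R : ZMod (p*m) × ZMod n)
    (h : torusCollinear (p*m) n P Q R) :
    torusCollinear m n (tf p m n P) (tf p m n Q) (tf p m n R) := by
  obtain ⟨L, ⟨A, u, v, huv, rfl⟩, hP, hQ, hR⟩ := h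
  refine ⟨_, ⟨tf p m n A, u, v, huv, rfl⟩, ?_, ?_, ?_⟩
  · obtain ⟨k, hk⟩ := hP
    exact ⟨k, by rw [hk]; exact Prod.ext (by show ZMod.castHom (dvd_mul_left m p) (ZMod m) _ = _; rw [map_add, map_intCast]; rfl) rfl⟩
  · obtain ⟨k, hk⟩ := hQ
    exact ⟨k, by rw [hk]; exact Prod.ext (by show ZMod.castHom (dvd_mul_left m p) (ZMod m) _ = _; rw [map_add, map_intCast]; rfl) rfl⟩
  · obtain ⟨k, hk⟩ := hR
    exact ⟨k, by rw [hk]; exact Prod.ext (by show ZMod.castHom (dvd_mul_left m p) (ZMod m) _ = _; rw [map_add, map_intCast]; rfl) rfl⟩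

end

lemma card_le_two_noThree {M N : ℕ} (S : Finset (ZMod M × ZMod N)) (h : S.card ≤ 2) :
    noThreeInLine M N ↑S := by
  intro P hP Q hQ R hR hPQ hPR hQR _
  have hsub : ({P, Q, R} : Finset (ZMod M × ZMod N)) ⊆ S := by
    intro z hz
    simp only [Finset.mem_insert, Finset.mem_singleton] at hz
    rcases hz with rfl | rfl | rfl
    · exact hP
    · exact hQ
    · exact hR
  have h3 : ({P, Q, R} : Finset (ZMod M × ZMod N)).card = 3 := by
    rw [Finset.card_insert_of_notMem (by simp [hPQ, hPR]),
      Finset.card_insert_of_notMem (by simp [hQR]), Finset.card_singleton]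
  have := Finset.card_le_card hsub
  omega

lemma tau_bddAbove (M N : ℕ) [NeZero M] [NeZero N] :
    BddAbove {k | ∃ S : Finset (ZMod M × ZMod N), noThreeInLine M N ↑S ∧ S.card = k} := by
  refine ⟨Fintype.card (ZMod M × ZMod N), ?_⟩
  rintro k ⟨S, _, rfl⟩
  exact Finset.card_le_univ S

lemma le_tau {M N : ℕ} [NeZero M] [NeZero N] {k : ℕ}
    (h : ∃ S : Finset (ZMod M × ZMod N), noThreeInLine M N ↑S ∧ S.card = k) :
    k ≤ tau M N :=
  le_csSup (tau_bddAbove M N) h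

lemma tau_le {M N : ℕ} {c : ℕ}
    (h : ∀ k, (∃ S : Finset (ZMod M × ZMod N), noThreeInLine M N ↑S ∧ S.card = k) → k ≤ c) :
    tau M N ≤ c := by
  apply csSup_le
  · exact ⟨0, ∅, by intro P hP; simp at hP, by simp⟩
  · rintro k ⟨S, hS, rfl⟩
    exact h _ ⟨S, hS, rfl⟩

lemma two_le_tau {M N : ℕ} [NeZero M] [NeZero N] (h : 1 < M * N) : 2 ≤ tau M N := by
  have hcard : 1 < Fintype.card (ZMod M × ZMod N) := by
    rw [Fintype.card_prod, ZMod.card, ZMod.card]; exact h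
  obtain ⟨a, b, hab⟩ := Fintype.exists_pair_of_one_lt_card hcard
  apply le_tau
  refine ⟨{a, b}, card_le_two_noThree _ (by exact (Finset.card_insert_le _ _).trans (by simp)), ?_⟩
  rw [Finset.card_insert_of_notMem (by simpa using hab), Finset.card_singleton]

lemma tau_prime_step (p m n : ℕ) (hp : p.Prime) (hm : 0 < m) (hn : 0 < n) (hpn : ¬ p ∣ n)
    (hmn : ¬ (m = 1 ∧ n = 1)) : tau (p*m) n = tau m n := by
  haveI : NeZero m := ⟨hm.ne'⟩
  haveI : NeZero n := ⟨hn.ne'⟩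
  haveI : NeZero (p*m) := ⟨Nat.mul_ne_zero hp.pos.ne' hm.ne'⟩
  have hmn2 : 1 < m * n := by
    rcases Nat.lt_or_ge 1 (m*n) with h | h
    · exact h
    · exfalso
      apply hmn
      have h1 : m * n = 1 :=
        le_antisymm h (Nat.one_le_iff_ne_zero.mpr (Nat.mul_ne_zero hm.ne' hn.ne'))
      exact ⟨Nat.eq_one_of_mul_eq_one_right h1, Nat.eq_one_of_mul_eq_one_left h1⟩
  apply le_antisymm
  · apply tau_le
    rintro k ⟨S, hS, rfl⟩
    by_cases hc : S.card ≤ 2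
    · exact hc.trans (two_le_tau hmn2)
    · push_neg at hc
      have hinj : Set.InjOn (tf p m n) ↑S := by
        intro P hP Q hQ hPQ
        by_contra hne
        have h1 : 1 ≤ ((S.erase P).erase Q).card := by
          rw [Finset.card_erase_of_mem (Finset.mem_erase.mpr ⟨Ne.symm hne, hQ⟩),
            Finset.card_erase_of_mem hP]
          omega
        obtain ⟨R, hR⟩ := Finset.card_pos.mp h1
        have hRQ : R ≠ Q := (Finset.mem_erase.mp hR).1
        have hRP : R ≠ P := (Finset.mem_erase.mp (Finset.mem_erase.mp hR).2).1
        have hRS : R ∈ S := (Finset.mem_erase.mp (Finset.mem_erase.mp hR).2).2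
        obtain ⟨L, hL, hl1, hl2⟩ := two_point_line m n (tf p m n P) (tf p m n R)
        have hcol : torusCollinear m n (tf p m n P) (tf p m n Q) (tf p m n R) :=
          ⟨L, hL, hl1, hPQ ▸ hl1, hl2⟩
        exact hS P hP Q hQ R hRS hne (Ne.symm hRP) (Ne.symm hRQ)
          (collinear_lift p m n hp hm.ne' hn.ne' hpn P Q R hcol)
      apply le_tau
      refine ⟨S.image (tf p m n), ?_, by rw [Finset.card_image_of_injOn hinj]⟩
      intro P' hP' Q' hQ' R' hR' h1 h2 h3 hcol
      simp only [Finset.coe_image, Set.mem_image, Finset.mem_coe] at hP' hQ' hR'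
      obtain ⟨P, hP, rfl⟩ := hP'
      obtain ⟨Q, hQ, rfl⟩ := hQ'
      obtain ⟨R, hR, rfl⟩ := hR'
      exact hS P hP Q hQ R hR (fun e => h1 (congrArg _ e)) (fun e => h2 (congrArg _ e))
        (fun e => h3 (congrArg _ e)) (collinear_lift p m n hp hm.ne' hn.ne' hpn P Q R hcol)
  · apply tau_le
    rintro k ⟨S, hS, rfl⟩
    have hfg : ∀ z : ZMod m × ZMod n,
        tf p m n ((z.1.val : ZMod (p*m)), z.2) = z := by
      intro z
      simp [tf]
    set g : ZMod m × ZMod n → ZMod (p*m) × ZMod n :=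
      fun z => ((z.1.val : ZMod (p*m)), z.2) with hg
    have hginj : Function.Injective g := by
      intro a b hab
      have := congrArg (tf p m n) hab
      rwa [hfg, hfg] at this
    apply le_tau
    refine ⟨S.image g, ?_, by rw [Finset.card_image_of_injective _ hginj]⟩
    intro P' hP' Q' hQ' R' hR' h1 h2 h3 hcol
    simp only [Finset.coe_image, Set.mem_image, Finset.mem_coe] at hP' hQ' hR'
    obtain ⟨P, hP, rfl⟩ := hP'
    obtain ⟨Q, hQ, rfl⟩ := hQ'
    obtain ⟨R, hR, rfl⟩ := hR'
    have hcol2 := collinear_push p m n _ _ _ hcol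
    rw [hfg, hfg, hfg] at hcol2
    exact hS P hP Q hQ R hR (fun e => h1 (congrArg g e)) (fun e => h2 (congrArg g e))
      (fun e => h3 (congrArg g e)) hcol2

lemma collinear_swap {M N : ℕ} {P Q R : ZMod M × ZMod N}
    (h : torusCollinear M N P Q R) :
    torusCollinear N M P.swap Q.swap R.swap := by
  obtain ⟨L, ⟨A, u, v, huv, rfl⟩, hP, hQ, hR⟩ := h
  refine ⟨{P' | ∃ k : ℤ, P' = (A.2 + ((k * v : ℤ) : ZMod N), A.1 + ((k * u : ℤ) : ZMod M))},
    ⟨A.swap, v, u, by rw [Int.gcd_comm]; exact huv, rfl⟩, ?_, ?_, ?_⟩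
  · obtain ⟨k, hk⟩ := hP
    exact ⟨k, by rw [hk]; rfl⟩
  · obtain ⟨k, hk⟩ := hQ
    exact ⟨k, by rw [hk]; rfl⟩
  · obtain ⟨k, hk⟩ := hR
    exact ⟨k, by rw [hk]; rfl⟩

lemma tau_le_swap (M N : ℕ) [NeZero M] [NeZero N] : tau M N ≤ tau N M := by
  apply tau_le
  rintro k ⟨S, hS, rfl⟩
  have hinj : Function.Injective (Prod.swap : ZMod M × ZMod N → ZMod N × ZMod M) :=
    Prod.swap_injective
  apply le_tau
  refine ⟨S.image Prod.swap, ?_, by rw [Finset.card_image_of_injective _ hinj]⟩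
  intro P' hP' Q' hQ' R' hR' h1 h2 h3 hcol
  simp only [Finset.coe_image, Set.mem_image, Finset.mem_coe] at hP' hQ' hR'
  obtain ⟨P, hP, rfl⟩ := hP'
  obtain ⟨Q, hQ, rfl⟩ := hQ'
  obtain ⟨R, hR, rfl⟩ := hR'
  have := collinear_swap hcol
  simp only [Prod.swap_swap] at this
  exact hS P hP Q hQ R hR (fun e => h1 (congrArg _ e)) (fun e => h2 (congrArg _ e))
    (fun e => h3 (congrArg _ e)) this

lemma tau_comm (M N : ℕ) (hM : 0 < M) (hN : 0 < N) : tau M N = tau N M := by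
  haveI : NeZero M := ⟨hM.ne'⟩
  haveI : NeZero N := ⟨hN.ne'⟩
  exact le_antisymm (tau_le_swap M N) (tau_le_swap N M)

lemma tau_mul_left : ∀ x m n : ℕ, 0 < x → 0 < m → 0 < n → Nat.gcd n x = 1 →
    ¬ (m = 1 ∧ n = 1) → tau (x*m) n = tau m n := by
  intro x
  induction x using Nat.strong_induction_on with
  | _ x ih =>
    intro m n hx hm hn hgcd hmn
    rcases eq_or_ne x 1 with rfl | hx1
    · rw [one_mul]
    · obtain ⟨q, hq, hqx⟩ := Nat.exists_prime_and_dvd hx1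
      obtain ⟨x', rfl⟩ := hqx
      have hx' : 0 < x' := Nat.pos_of_ne_zero (by rintro rfl; simp at hx)
      have hqn : ¬ q ∣ n := by
        intro hd
        have h2 := Nat.dvd_gcd hd (dvd_mul_right q x')
        rw [hgcd] at h2
        have := Nat.le_of_dvd one_pos h2
        have := hq.two_le
        omega
      have hmn' : ¬ (x'*m = 1 ∧ n = 1) := by
        rintro ⟨h1', h2'⟩
        exact hmn ⟨Nat.eq_one_of_mul_eq_one_left h1', h2'⟩
      have step := tau_prime_step q (x'*m) n hq (Nat.mul_pos hx' hm) hn hqn hmn'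
      have hgcd' : Nat.gcd n x' = 1 :=
        Nat.Coprime.coprime_dvd_right (dvd_mul_left x' q) hgcd
      have hlt : x' < q * x' := by
        calc x' = 1 * x' := (one_mul x').symm
        _ < q * x' := (Nat.mul_lt_mul_right hx').mpr hq.one_lt
      rw [mul_assoc, step]
      exact ih x' hlt m n hx' hm hn hgcd' hmn

theorem stmt3 (m n x y : ℕ) (hm : 0 < m) (hn : 0 < n) (hx : 0 < x) (hy : 0 < y)
    (hmn : ¬ (m = 1 ∧ n = 1))
    (hxy : Nat.gcd x y = 1) (hmy : Nat.gcd m y = 1) (hnx : Nat.gcd n x = 1) :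
    tau (x * m) (y * n) = tau m n := by
  have hyn : ¬ (m = 1 ∧ y * n = 1) := by
    rintro ⟨h1, h2⟩
    exact hmn ⟨h1, Nat.eq_one_of_mul_eq_one_left h2⟩
  have h1 : tau (x*m) (y*n) = tau m (y*n) := by
    apply tau_mul_left x m (y*n) hx hm (Nat.mul_pos hy hn) _ hyn
    exact (Nat.Coprime.mul_right hxy (Nat.coprime_comm.mp hnx)).symm
  have h2 : tau (y*n) m = tau n m := by
    apply tau_mul_left y n m hy hn hm hmy
    rintro ⟨h1', h2'⟩; exact hmn ⟨h2', h1'⟩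
  rw [h1, tau_comm m (y*n) hm (Nat.mul_pos hy hn), h2, tau_comm n m hn hm]
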